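/- For n ∈ {7, 8}, the edge irregularity strength of the cycle-star graph CS_{6,n−6} equals n − 3. -/

import Mathlib

/-- The weight of an edge under a vertex labeling `φ`: the sum of the labels
of its two endpoints. -/
def edgeWeight {V : Type*} (φ : V → ℕ) : Sym2 V → ℕ :=
  Sym2.lift ⟨fun u v => φ u + φ v, fun u v => Nat.add_comm _ _⟩

/-- `φ` is an edge irregular `k`-labeling of `G`: it is a vertex labeling with
labels in `{1, …, k}` such that distinct edges get distinct weights. -/
def IsEdgeIrregularLabeling {V : Type*} (G : SimpleGraph V) (k : ℕ) (φ : V → ℕ) : Prop :=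
  (∀ v, φ v ∈ Finset.Icc 1 k) ∧ Set.InjOn (edgeWeight φ) G.edgeSet

/-- The edge irregularity strength of `G`: the least `k` for which `G` admits
an edge irregular `k`-labeling. -/
noncomputable def edgeIrregularityStrength {V : Type*} (G : SimpleGraph V) : ℕ :=
  sInf {k | ∃ φ : V → ℕ, IsEdgeIrregularLabeling G k φ}

/-- The cycle-star graph `CS_{k, n-k}` on `n` vertices: vertices `0, …, k-1`
form a cycle of length `k`, and the remaining `n - k` vertices are pendant
leaves all attached to vertex `0` of the cycle. -/
def cycleStar (k n : ℕ) : SimpleGraph (Fin n) :=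
  SimpleGraph.fromRel (fun i j =>
    (i.val < k ∧ j.val < k ∧ j.val = (i.val + 1) % k) ∨ (i.val = 0 ∧ k ≤ j.val))

instance (k n : ℕ) : DecidableRel (cycleStar k n).Adj := fun a b =>
  decidable_of_iff _ (SimpleGraph.fromRel_adj _ a b).symm

/-- Counting lower bound: an edge irregular `k`-labeling forces the number of
edges to be at most `2k - 1`, since all edge weights are distinct and lie in
`{2, …, 2k}`. -/
lemma card_le_of_irr {n : ℕ} (G : SimpleGraph (Fin n)) [DecidableRel G.Adj] {k : ℕ}
    {φ : Fin n → ℕ} (h : IsEdgeIrregularLabeling G k φ) : G.edgeFinset.card ≤ 2 * k - 1 := by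
  have hle : G.edgeFinset.card ≤ (Finset.Icc 2 (2*k)).card := by
    apply Finset.card_le_card_of_injOn (edgeWeight φ)
    · intro e he
      induction e using Sym2.ind with
      | _ a b =>
        have ha := h.1 a
        have hb := h.1 b
        simp only [Finset.mem_Icc] at *
        simp only [edgeWeight, Sym2.lift_mk, Finset.mem_coe, Finset.mem_Icc]
        omega
    · intro a ha b hb hab
      exact h.2 (SimpleGraph.mem_edgeFinset.mp ha) (SimpleGraph.mem_edgeFinset.mp hb) hab
  simpa [Nat.card_Icc] using hle

theorem es_cycleStar_six_small (n : ℕ) (hn : n = 7 ∨ n = 8) :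
    edgeIrregularityStrength (cycleStar 6 n) = n - 3 := by
  rcases hn with rfl | rfl
  · have hmem : (4 : ℕ) ∈ {k | ∃ φ : Fin 7 → ℕ, IsEdgeIrregularLabeling (cycleStar 6 7) k φ} := by
      refine ⟨![1,1,2,4,4,3,4], ?_, ?_⟩
      · decide
      · rw [Set.injOn_iff_injective]; decide
    have hcard : (cycleStar 6 7).edgeFinset.card = 7 := by decide
    refine le_antisymm (Nat.sInf_le hmem) (le_csInf ⟨4, hmem⟩ ?_)
    rintro k ⟨φ, hφ⟩
    have := card_le_of_irr _ hφ
    omega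
  · have hmem : (5 : ℕ) ∈ {k | ∃ φ : Fin 8 → ℕ, IsEdgeIrregularLabeling (cycleStar 6 8) k φ} := by
      refine ⟨![1,1,3,5,5,4,2,5], ?_, ?_⟩
      · decide
      · rw [Set.injOn_iff_injective]; decide
    have hcard : (cycleStar 6 8).edgeFinset.card = 8 := by decide
    refine le_antisymm (Nat.sInf_le hmem) (le_csInf ⟨5, hmem⟩ ?_)
    rintro k ⟨φ, hφ⟩
    have := card_le_of_irr _ hφ
    omega
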